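/- Let m ≥ 2 be an integer and p ∈ D_{2/m} a prime with p > m. If f_{2/m}(p) < (m+2)p − 2, then there exists t ∈ T(m) with p = 1 + tm; in particular p + 2 is also prime. -/

import Mathlib

/-- The set of natural numbers generated by `A` under addition (containing `0`). -/
def NSgen (A : Set ℕ) : Set ℕ := (AddSubmonoid.closure A : Set ℕ)

/-- `S` is a numerical semigroup: additively closed, contains `0`,
has finite complement in `ℕ`, and `S ≠ ℕ`. -/
def IsNumSgrp (S : Set ℕ) : Prop :=
  0 ∈ S ∧ (∀ a ∈ S, ∀ b ∈ S, a + b ∈ S) ∧ Sᶜ.Finite ∧ S ≠ Set.univ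

/-- The Frobenius number: the largest natural number not in `S`. -/
noncomputable def NSfrob (S : Set ℕ) : ℕ := sSup Sᶜ

/-- The genus: the number of gaps of `S`. -/
noncomputable def NSgenus (S : Set ℕ) : ℕ := Sᶜ.ncard

/-- The multiplicity: the least positive element of `S`. -/
noncomputable def NSmult (S : Set ℕ) : ℕ := sInf {n | n ∈ S ∧ n ≠ 0}

/-- The atoms (minimal generators) of `S`: the set `S* \ (S* + S*)` where `S* = S \ {0}`. -/
def NSatoms (S : Set ℕ) : Set ℕ :=
  {n | n ∈ S ∧ n ≠ 0 ∧ ¬ ∃ a, a ∈ S ∧ a ≠ 0 ∧ ∃ b, b ∈ S ∧ b ≠ 0 ∧ n = a + b}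

/-- The embedding dimension: the number of atoms of `S`. -/
noncomputable def NSembdim (S : Set ℕ) : ℕ := (NSatoms S).ncard

/-- The primes in the interval `I_lam(p) = [p, p + lam*p]`. -/
def primesIn (lam : ℝ) (p : ℕ) : Set ℕ :=
  {q | q.Prime ∧ p ≤ q ∧ (q : ℝ) ≤ p + lam * p}

/-- `S_lam(p)`: the numerical semigroup generated by the primes in `[p, p + lam*p]`. -/
def Slam (lam : ℝ) (p : ℕ) : Set ℕ := NSgen (primesIn lam p)

/-- `D_lam`: the primes `p` such that `[p, p + lam*p]` contains at least two primes. -/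
def Dlam (lam : ℝ) : Set ℕ :=
  {p | p.Prime ∧ ∃ q ∈ primesIn lam p, ∃ r ∈ primesIn lam p, q ≠ r}

/-- `f_lam(p)`: the Frobenius number of `S_lam(p)`. -/
noncomputable def flam (lam : ℝ) (p : ℕ) : ℕ := NSfrob (Slam lam p)

/-- `p_n`, the `n`-th prime in natural order (`nthPrime 1 = 2`). -/
noncomputable def nthPrime (n : ℕ) : ℕ := Nat.nth Nat.Prime (n - 1)

/-- `S_n`: the numerical semigroup generated by all primes `≥ p_n`. -/
noncomputable def Sn (n : ℕ) : Set ℕ := NSgen {q | q.Prime ∧ nthPrime n ≤ q}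

/-- `f_n`: the Frobenius number of `S_n`. -/
noncomputable def fn (n : ℕ) : ℕ := NSfrob (Sn n)

/-- `S(p)`: the numerical semigroup generated by the primes in `[p, 2p]`. -/
def Sp (p : ℕ) : Set ℕ := NSgen {q | q.Prime ∧ p ≤ q ∧ q ≤ 2 * p}

/-- Statement `A(m)`: large `N` of the same parity as `m` are sums of `m` almost equal primes. -/
def Astmt (m : ℕ) : Prop :=
  ∀ δ : ℝ, 0 < δ → ∃ N₀ : ℕ, 0 < N₀ ∧ ∀ N : ℕ, N₀ ≤ N → N % 2 = m % 2 →
    ∃ q : Fin m → ℕ, (∀ i, (q i).Prime) ∧ (∑ i, q i) = N ∧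
      ∀ i, |(N : ℝ) / m - q i| < δ * N

/-- `T(m)`: positive integers `t` such that `1+tm`, `3+tm` and `1+t(m+2)` are all prime. -/
def Tset (m : ℕ) : Set ℕ :=
  {t | 0 < t ∧ (1 + t * m).Prime ∧ (3 + t * m).Prime ∧ (1 + t * (m + 2)).Prime}



lemma oddSum (l : Multiset ℕ) (h : ∀ x ∈ l, x % 2 = 1) :
    l.sum % 2 = Multiset.card l % 2 := by
  induction l using Multiset.induction_on with
  | empty => simp
  | cons a s ih =>
    have h1 := h a (Multiset.mem_cons_self a s)
    have h2 := ih fun x hx => h x (Multiset.mem_cons_of_mem hx)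
    rw [Multiset.sum_cons, Multiset.card_cons]
    omega

lemma mulSum (m : ℕ) (l : Multiset ℕ) : (l.map fun q => m * q).sum = m * l.sum := by
  induction l using Multiset.induction_on with
  | empty => simp
  | cons a s ih => simp [Multiset.sum_cons, ih, Nat.mul_add]

lemma msumBound (m p : ℕ) (l : Multiset ℕ) (h : ∀ q ∈ l, m * q ≤ (m+2)*p) :
    m * l.sum ≤ Multiset.card l * ((m+2)*p) := by
  have h1 : (l.map fun q => m * q).sum ≤ Multiset.card (l.map fun q => m * q) • ((m+2)*p) :=
    Multiset.sum_le_card_nsmul _ _ (by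
      intro x hx
      obtain ⟨q, hq, rfl⟩ := Multiset.mem_map.mp hx
      exact h q hq)
  rw [mulSum] at h1
  simpa [smul_eq_mul] using h1

lemma aparity (m p : ℕ) (hpodd : p % 2 = 1) : ((m+2)*p) % 2 = m % 2 := by
  rw [Nat.mul_mod, hpodd, mul_one]
  omega

lemma key1 (m p : ℕ) (hm : 2 ≤ m) (hp : p.Prime) (hpm : m < p)
    (l : Multiset ℕ) (hl : ∀ q ∈ l, q.Prime ∧ p ≤ q ∧ m * q ≤ (m+2)*p)
    (hsum : l.sum + 2 = (m+2)*p) :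
    ∃ t, 0 < t ∧ p = 1 + t * m ∧ (1 + t * (m+2)).Prime := by
  have hp3 : 3 ≤ p := by omega
  have hpodd : p % 2 = 1 := Nat.odd_iff.mp (hp.odd_of_ne_two (by omega))
  have hqodd : ∀ q ∈ l, q % 2 = 1 := fun q hq =>
    Nat.odd_iff.mp ((hl q hq).1.odd_of_ne_two (by have := (hl q hq).2.1; omega))
  have hk1 : Multiset.card l * p ≤ l.sum := by
    simpa [smul_eq_mul] using Multiset.card_nsmul_le_sum (fun q hq => (hl q hq).2.1)
  have hk2 : m * l.sum ≤ Multiset.card l * ((m+2)*p) :=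
    msumBound m p l (fun q hq => (hl q hq).2.2)
  have hple : Multiset.card l < m + 2 := by
    have h1 : Multiset.card l * p < (m+2) * p := by linarith
    exact Nat.lt_of_mul_lt_mul_right h1
  have hpge : m ≤ Multiset.card l := by
    by_contra h
    push_neg at h
    have h1 : Multiset.card l * ((m+2)*p) + (m+2)*p ≤ m * ((m+2)*p) := by
      calc Multiset.card l * ((m+2)*p) + (m+2)*p = (Multiset.card l + 1) * ((m+2)*p) := by ring
        _ ≤ m * ((m+2)*p) := Nat.mul_le_mul_right _ h
    have h2 : m * l.sum + 2*m = m * ((m+2)*p) := by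
      rw [← hsum]; ring
    have h3 : (m+2)*p ≤ 2*m := by linarith
    have h4 : (m+2)*(m+1) ≤ (m+2)*p := Nat.mul_le_mul_left _ (by omega)
    nlinarith
  have hpar : l.sum % 2 = Multiset.card l % 2 := oddSum l hqodd
  have hsp : (l.sum + 2) % 2 = m % 2 := by rw [hsum]; exact aparity m p hpodd
  have hkm : Multiset.card l = m := by omega
  -- lower bound on each element
  have hlow : ∀ q ∈ l, (m+2)*p ≤ m*q + 2*m := by
    intro q hq
    obtain ⟨l', rfl⟩ := Multiset.exists_cons_of_mem hq
    have hc' : Multiset.card l' + 1 = m := by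
      have := hkm; rw [Multiset.card_cons] at this; omega
    have h7 : m * l'.sum ≤ Multiset.card l' * ((m+2)*p) :=
      msumBound m p l' (fun r hr => (hl r (Multiset.mem_cons_of_mem hr)).2.2)
    have h8 : q + l'.sum + 2 = (m+2)*p := by rw [← Multiset.sum_cons]; exact hsum
    have h9 : m * q + m * l'.sum + 2*m = m * ((m+2)*p) := by
      calc m * q + m * l'.sum + 2*m = m * (q + l'.sum + 2) := by ring
        _ = m * ((m+2)*p) := by rw [h8]
    have h10 : Multiset.card l' * ((m+2)*p) + (m+2)*p = m * ((m+2)*p) := by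
      rw [← hc']; ring
    linarith
  have hne : ∀ a ∈ l, ∀ b ∈ l, ¬ a < b := by
    intro a ha b hb hab
    have h1 := hqodd a ha
    have h2 := hqodd b hb
    have hb2 : a + 2 ≤ b := by omega
    have hla : (m+2)*p ≤ m*a + 2*m := hlow a ha
    have hub : m*b ≤ (m+2)*p := (hl b hb).2.2
    have hab2 : m*a + 2*m ≤ m*b := by
      calc m*a + 2*m = m*(a+2) := by ring
        _ ≤ m*b := Nat.mul_le_mul_left _ hb2
    have hmb : m*b = (m+2)*p := le_antisymm hub (by linarith)
    have hdvd : m ∣ 2*p := by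
      have hd1 : m ∣ (m+2)*p := ⟨b, hmb.symm⟩
      have he : (m+2)*p = m*p + 2*p := by ring
      rw [he] at hd1
      exact (Nat.dvd_add_right ⟨p, rfl⟩).mp hd1
    have hcop : Nat.Coprime m p :=
      ((hp.coprime_iff_not_dvd).mpr (fun h => by
        have := Nat.le_of_dvd (by omega) h; omega)).symm
    have hm2 : m ∣ 2 := hcop.dvd_of_dvd_mul_right hdvd
    have hm2' : m = 2 := by
      have := Nat.le_of_dvd (by norm_num) hm2; omega
    subst hm2'
    have : b = 2*p := by omega
    omega
  have hl0 : l ≠ 0 := by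
    intro h; rw [h] at hkm; simp at hkm; omega
  obtain ⟨q₀, hq₀⟩ := Multiset.exists_mem_of_ne_zero hl0
  have hall : ∀ x ∈ l, x = q₀ := by
    intro x hx
    rcases lt_trichotomy x q₀ with h | h | h
    · exact absurd h (hne x hx q₀ hq₀)
    · exact h
    · exact absurd h (hne q₀ hq₀ x hx)
  have hrepl : l = Multiset.replicate (Multiset.card l) q₀ :=
    Multiset.eq_replicate_card.mpr hall
  have hsum' : l.sum = m * q₀ := by
    rw [hrepl, Multiset.sum_replicate, hkm, smul_eq_mul]
  obtain ⟨s, hs⟩ : ∃ s, q₀ = p + 2*s := by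
    have h1 := hqodd q₀ hq₀
    have h2 := (hl q₀ hq₀).2.1
    exact ⟨(q₀ - p)/2, by omega⟩
  have hmain : m * q₀ + 2 = (m+2)*p := by rw [← hsum']; exact hsum
  have hexp : m*p + 2*(m*s) + 2 = m*p + 2*p := by
    have e1 : m * q₀ = m*p + 2*(m*s) := by rw [hs]; ring
    have e2 : (m+2)*p = m*p + 2*p := by ring
    linarith [hmain, e1.symm ▸ hmain]
  have h3 : 2*p = 2*(m*s + 1) := by linarith
  have h4 : p = m*s + 1 := Nat.eq_of_mul_eq_mul_left (by norm_num) h3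
  have hs0 : 0 < s := by
    rcases Nat.eq_zero_or_pos s with h | h
    · rw [h] at h4; simp at h4; omega
    · exact h
  refine ⟨s, hs0, by rw [h4]; ring, ?_⟩
  have : 1 + s*(m+2) = q₀ := by rw [hs, h4]; ring
  rw [this]
  exact (hl q₀ hq₀).1

lemma key2 (m p : ℕ) (hm : 2 ≤ m) (hp : p.Prime) (hpm : m < p)
    (l : Multiset ℕ) (hl : ∀ q ∈ l, q.Prime ∧ p ≤ q ∧ m * q ≤ (m+2)*p)
    (hsum : l.sum = (m+2)*p + 2) : (p+2).Prime := by
  have hp3 : 3 ≤ p := by omega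
  have hpodd : p % 2 = 1 := Nat.odd_iff.mp (hp.odd_of_ne_two (by omega))
  have hqodd : ∀ q ∈ l, q % 2 = 1 := fun q hq =>
    Nat.odd_iff.mp ((hl q hq).1.odd_of_ne_two (by have := (hl q hq).2.1; omega))
  have hk1 : Multiset.card l * p ≤ l.sum := by
    simpa [smul_eq_mul] using Multiset.card_nsmul_le_sum (fun q hq => (hl q hq).2.1)
  have hk2 : m * l.sum ≤ Multiset.card l * ((m+2)*p) :=
    msumBound m p l (fun q hq => (hl q hq).2.2)
  have hple : Multiset.card l < m + 3 := by
    have e : (m+3)*p = (m+2)*p + p := by ring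
    have h1 : Multiset.card l * p < (m+3) * p := by linarith
    exact Nat.lt_of_mul_lt_mul_right h1
  have hpge : m + 1 ≤ Multiset.card l := by
    by_contra h
    push_neg at h
    have h1 : Multiset.card l * ((m+2)*p) ≤ m * ((m+2)*p) :=
      Nat.mul_le_mul_right _ (by omega)
    have h2 : m * l.sum = m * ((m+2)*p) + 2*m := by rw [hsum]; ring
    linarith
  have hpar : l.sum % 2 = Multiset.card l % 2 := oddSum l hqodd
  have hsp : l.sum % 2 = m % 2 := by
    rw [hsum]
    have := aparity m p hpodd
    omega
  have hkm : Multiset.card l = m + 2 := by omega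
  have hex : ∃ q ∈ l, q ≠ p := by
    by_contra h
    push_neg at h
    have hrepl : l = Multiset.replicate (Multiset.card l) p :=
      Multiset.eq_replicate_card.mpr h
    have : l.sum = (m+2) * p := by
      rw [hrepl, Multiset.sum_replicate, hkm, smul_eq_mul]
    linarith [hsum, this]
  obtain ⟨q, hq, hqp⟩ := hex
  have hqodd' := hqodd q hq
  have hpq := (hl q hq).2.1
  have hqprime := (hl q hq).1
  obtain ⟨l', rfl⟩ := Multiset.exists_cons_of_mem hq
  have hc' : Multiset.card l' = m + 1 := by
    have := hkm; rw [Multiset.card_cons] at this; omega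
  have h7 : (m+1)*p ≤ l'.sum := by
    have := Multiset.card_nsmul_le_sum
      (fun r hr => (hl r (Multiset.mem_cons_of_mem hr)).2.1)
    rw [hc'] at this
    simpa [smul_eq_mul] using this
  have h8 : q + l'.sum = (m+2)*p + 2 := by rw [← Multiset.sum_cons]; exact hsum
  have hqle : q ≤ p + 2 := by
    have e : (m+2)*p = (m+1)*p + p := by ring
    linarith
  have : q = p + 2 := by omega
  rw [← this]
  exact hqprime

lemma primesIn_bound' (m p q : ℕ) (hm : 2 ≤ m) (hq : q ∈ primesIn (2/(m:ℝ)) p) :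
    q.Prime ∧ p ≤ q ∧ m * q ≤ (m+2)*p := by
  obtain ⟨h1, h2, h3⟩ := hq
  refine ⟨h1, h2, ?_⟩
  have hm0 : (0:ℝ) < m := by exact_mod_cast (by omega : 0 < m)
  have e : (m:ℝ) * ((p:ℝ) + 2/(m:ℝ) * p) = m*p + 2*p := by
    field_simp
  have h4 : (m:ℝ) * q ≤ (m:ℝ)*p + 2*(p:ℝ) := by
    have := mul_le_mul_of_nonneg_left h3 hm0.le
    linarith [e ▸ this]
  have h5 : ((m*q : ℕ):ℝ) ≤ (((m+2)*p : ℕ):ℝ) := by push_cast; linarith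
  exact_mod_cast h5

theorem statement13 (m : ℕ) (hm : 2 ≤ m) (p : ℕ) (hp : p ∈ Dlam (2 / (m : ℝ)))
    (hpm : m < p) (hf : flam (2 / (m : ℝ)) p + 2 < (m + 2) * p) :
    (∃ t ∈ Tset m, p = 1 + t * m) ∧ (p + 2).Prime := by
  obtain ⟨hpp, a, ha, b, hb, hab⟩ := hp
  have hcop : Nat.Coprime a b := (Nat.coprime_primes ha.1 hb.1).mpr hab
  have hsub : ({a, b} : Set ℕ) ⊆ primesIn (2/(m:ℝ)) p := by
    intro x hx
    rcases hx with rfl | hx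
    · exact ha
    · rw [Set.mem_singleton_iff] at hx; subst hx; exact hb
  have hBdd : BddAbove (Slam (2/(m:ℝ)) p)ᶜ := by
    refine ⟨a*b, fun n hn => ?_⟩
    have hn' : n ∉ AddSubmonoid.closure ({a, b} : Set ℕ) := fun hc =>
      hn (AddSubmonoid.closure_mono hsub hc)
    have h1 : n ≤ a*b - a - b := (frobeniusNumber_pair hcop ha.1.one_lt hb.1.one_lt).2 hn'
    exact h1.trans ((Nat.sub_le _ _).trans (Nat.sub_le _ _))
  have hrep : ∀ N, flam (2/(m:ℝ)) p < N → N ∈ AddSubmonoid.closure (primesIn (2/(m:ℝ)) p) := by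
    intro N hN
    by_contra h
    have h2 : N ≤ sSup (Slam (2/(m:ℝ)) p)ᶜ := le_csSup hBdd h
    have h3 : N ≤ flam (2/(m:ℝ)) p := h2
    omega
  have h2le : 2 ≤ (m+2)*p := le_trans (by omega) (Nat.le_mul_of_pos_right _ hpp.pos)
  have hN1 : flam (2/(m:ℝ)) p < (m+2)*p - 2 := Nat.lt_sub_of_add_lt hf
  obtain ⟨l₁, hl₁, hl₁sum⟩ := AddSubmonoid.exists_multiset_of_mem_closure (hrep _ hN1)
  have hsum1 : l₁.sum + 2 = (m+2)*p := by rw [hl₁sum]; omega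
  obtain ⟨t, ht0, hpt, htp⟩ := key1 m p hm hpp hpm l₁
    (fun q hq => primesIn_bound' m p q hm (hl₁ q hq)) hsum1
  have hN2 : flam (2/(m:ℝ)) p < (m+2)*p + 2 := by omega
  obtain ⟨l₂, hl₂, hl₂sum⟩ := AddSubmonoid.exists_multiset_of_mem_closure (hrep _ hN2)
  have hp2 : (p+2).Prime := key2 m p hm hpp hpm l₂
    (fun q hq => primesIn_bound' m p q hm (hl₂ q hq)) hl₂sum
  have e1 : 1 + t*m = p := hpt.symm
  have e2 : 3 + t*m = p + 2 := by rw [hpt]; ring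
  exact ⟨⟨t, ⟨ht0, e1 ▸ hpp, e2 ▸ hp2, htp⟩, hpt⟩, hp2⟩
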